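/- Cycle-breaking preserves boundedness: Let DC be a set of degree constraints over [n] under which every variable in [n] is bound, and suppose the constraint dependency graph G_DC contains a directed cycle C. Then there exist a constraint (X, Y, N_{Y|X}) ∈ DC and a vertex y ∈ (Y∖X) lying on C, with some x ∈ X such that (x, y) is an edge of C, such that in the modified constraint set DC' obtained from DC by replacing (X, Y, N_{Y|X}) with (X, Y∖{y}, N_{Y|X}) (dropping it if Y∖{y} = X), every variable in [n] is still bound. -/
import Mathlib


open Finset

/-- **Cycle-breaking preserves boundedness.** Suppose every variable in `[n]` is bound
under `DC` (every constraint-closed set `B` equals `[n]`), and the constraint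
dependency graph contains a directed cycle `C` (given by an injective
`C : Fin (k+1) → Fin n`, each consecutive pair — cyclically — being an edge of `G_DC`).
Then there are a constraint `(X, Y, N) ∈ DC`, a vertex `y ∈ Y∖X` on `C`, and some
`x ∈ X` with `(x, y)` an edge of `C`, such that after replacing `(X, Y, N)` by
`(X, Y∖{y}, N)` (dropping it if `Y∖{y} = X`), every variable in `[n]` is still bound. -/
theorem cycle_breaking
    {n : ℕ} (DC : Finset (Finset (Fin n) × Finset (Fin n) × ℕ))
    (hDCvalid : ∀ c ∈ DC, c.1 ⊂ c.2.1 ∧ 1 ≤ c.2.2)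
    (hbound : ∀ B : Finset (Fin n), (∀ c ∈ DC, c.1 ⊆ B → c.2.1 ⊆ B) → B = Finset.univ)
    (k : ℕ) (C : Fin (k + 1) → Fin n) (hCinj : Function.Injective C)
    (hCedge : ∀ i : Fin (k + 1), ∃ c ∈ DC, C i ∈ c.1 ∧ C (i + 1) ∈ c.2.1 \ c.1) :
    ∃ c ∈ DC, ∃ y ∈ c.2.1 \ c.1,
      (∃ x ∈ c.1, ∃ i : Fin (k + 1), C i = x ∧ C (i + 1) = y) ∧
      (∀ B : Finset (Fin n),
        (∀ c' ∈ (DC.erase c) ∪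
            (if c.2.1.erase y = c.1 then (∅ : Finset (Finset (Fin n) × Finset (Fin n) × ℕ))
             else {(c.1, c.2.1.erase y, c.2.2)}),
          c'.1 ⊆ B → c'.2.1 ⊆ B) → B = Finset.univ) := by
  classical
  -- the one-step closure operator
  set F : Finset (Fin n) → Finset (Fin n) :=
    fun B => B ∪ DC.sup (fun c => if c.1 ⊆ B then c.2.1 else ∅) with hFdef
  have hmemF : ∀ (B : Finset (Fin n)) (v : Fin n),
      v ∈ F B ↔ v ∈ B ∨ ∃ d ∈ DC, d.1 ⊆ B ∧ v ∈ d.2.1 := by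
    intro B v
    simp only [hFdef, mem_union, Finset.mem_sup]
    constructor
    · rintro (h | ⟨d, hd, hv⟩)
      · exact Or.inl h
      · by_cases hdB : d.1 ⊆ B
        · rw [if_pos hdB] at hv; exact Or.inr ⟨d, hd, hdB, hv⟩
        · rw [if_neg hdB] at hv; exact absurd hv (notMem_empty v)
    · rintro (h | ⟨d, hd, hdB, hv⟩)
      · exact Or.inl h
      · exact Or.inr ⟨d, hd, by rw [if_pos hdB]; exact hv⟩
  have hsub : ∀ B, B ⊆ F B := fun B => subset_union_left
  have hiterMono : Monotone (fun t => F^[t] (∅ : Finset (Fin n))) := by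
    apply monotone_nat_of_le_succ
    intro t
    rw [Function.iterate_succ_apply']
    exact hsub _
  -- every vertex is reached by some iterate
  have hreach : ∀ v : Fin n, ∃ t, v ∈ F^[t] (∅ : Finset (Fin n)) := by
    intro v
    set S : Finset (Fin n) :=
      Finset.univ.filter (fun v => ∃ t, v ∈ F^[t] (∅ : Finset (Fin n))) with hSdef
    have hScl : ∀ c ∈ DC, c.1 ⊆ S → c.2.1 ⊆ S := by
      intro c hc hcS
      have hex : ∀ x ∈ c.1, ∃ t, x ∈ F^[t] (∅ : Finset (Fin n)) := by
        intro x hx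
        have := hcS hx
        rw [hSdef, mem_filter] at this
        exact this.2
      choose f hf using hex
      set T := c.1.attach.sup (fun x => f x.1 x.2) with hT
      have hcT : c.1 ⊆ F^[T] ∅ := by
        intro x hx
        exact hiterMono (Finset.le_sup (f := fun x : {a // a ∈ c.1} => f x.1 x.2)
          (mem_attach _ ⟨x, hx⟩)) (hf x hx)
      intro v hv
      rw [hSdef, mem_filter]
      refine ⟨mem_univ v, T + 1, ?_⟩
      rw [Function.iterate_succ_apply', hmemF]
      exact Or.inr ⟨c, hc, hcT, hv⟩
    have := hbound S hScl
    have hvS : v ∈ S := this ▸ mem_univ v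
    rw [hSdef, mem_filter] at hvS
    exact hvS.2
  set rank : Fin n → ℕ := fun v => Nat.find (hreach v) with hrank
  have hrank_spec : ∀ v, v ∈ F^[rank v] (∅ : Finset (Fin n)) := fun v => Nat.find_spec (hreach v)
  have hrank_min : ∀ v t, v ∈ F^[t] (∅ : Finset (Fin n)) → rank v ≤ t :=
    fun v t h => Nat.find_min' (hreach v) h
  -- choose the cycle vertex of minimal rank
  obtain ⟨j, -, hj⟩ := Finset.exists_min_image Finset.univ (fun i => rank (C i)) ⟨0, mem_univ 0⟩
  obtain ⟨c, hcDC, hx, hy⟩ := hCedge (j - 1)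
  have hj1 : (j - 1) + 1 = j := sub_add_cancel j 1
  rw [hj1] at hy
  refine ⟨c, hcDC, C j, hy, ⟨C (j - 1), hx, j - 1, rfl, by rw [hj1]⟩, ?_⟩
  intro B hB
  have key : ∀ t, F^[t] (∅ : Finset (Fin n)) ⊆ B := by
    intro t
    induction t with
    | zero => simp
    | succ t ih =>
      intro v hv
      rw [Function.iterate_succ_apply', hmemF] at hv
      rcases hv with hv | ⟨d, hd, hdX, hv⟩
      · exact ih hv
      · by_cases hdc : d = c
        · subst hdc
          by_cases hvy : v = C j
          · subst hvy
            -- C (j-1) ∈ d.1 ⊆ F^[t] ∅, so rank (C j) ≤ rank (C (j-1)) ≤ t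
            have h1 : rank (C (j - 1)) ≤ t := hrank_min _ _ (hdX hx)
            have h2 : rank (C j) ≤ t := le_trans (hj (j - 1) (mem_univ _)) h1
            exact ih (hiterMono h2 (hrank_spec (C j)))
          · by_cases hYX : d.2.1.erase (C j) = d.1
            · have : v ∈ d.2.1.erase (C j) := mem_erase.mpr ⟨hvy, hv⟩
              rw [hYX] at this
              exact ih (hdX this)
            · have hmem : (d.1, d.2.1.erase (C j), d.2.2) ∈
                  (DC.erase d) ∪
                  (if d.2.1.erase (C j) = d.1 then (∅ : Finset (Finset (Fin n) × Finset (Fin n) × ℕ))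
                   else {(d.1, d.2.1.erase (C j), d.2.2)}) := by
                apply mem_union_right
                rw [if_neg hYX]
                exact mem_singleton_self _
              have := hB _ hmem (fun x hxm => ih (hdX hxm))
              exact this (mem_erase.mpr ⟨hvy, hv⟩)
        · have hmem : d ∈ (DC.erase c) ∪
              (if c.2.1.erase (C j) = c.1 then (∅ : Finset (Finset (Fin n) × Finset (Fin n) × ℕ))
               else {(c.1, c.2.1.erase (C j), c.2.2)}) :=
            mem_union_left _ (mem_erase.mpr ⟨hdc, hd⟩)
          exact hB d hmem (fun x hxm => ih (hdX hxm)) hv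
  apply eq_univ_of_forall
  intro v
  obtain ⟨t, ht⟩ := hreach v
  exact key t ht
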